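/- arXiv:1901.11221 — 2 statements merged into one kernel-verified Lean document; each statement's English description precedes it below -/
import Mathlib

section
/- Let $x$ be a square integrable real random variable with mean $0$ and variance $\sigma^2 > 0$. Then $\mathbb{E}[\exp(x - \tfrac{1}{2}x^2 - \tfrac{1}{2}\sigma^2)] \le 1$. -/
open MeasureTheory

lemma bercu_key (t : ℝ) : Real.exp (t - (1 / 2) * t ^ 2) ≤ 1 + t + (1 / 2) * t ^ 2 := by
  have h1 := Real.add_one_le_exp (-(t - (1 / 2) * t ^ 2))
  have h2 : Real.exp (t - (1 / 2) * t ^ 2) * Real.exp (-(t - (1 / 2) * t ^ 2)) = 1 := by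
    rw [← Real.exp_add]; simp
  nlinarith [Real.exp_pos (t - (1 / 2) * t ^ 2), Real.exp_pos (-(t - (1 / 2) * t ^ 2)),
    sq_nonneg t, sq_nonneg (t ^ 2), sq_nonneg (1 - t)]

/-- Lemma 2.1 of Bercu–Touati: for a square-integrable centered random variable `x`
with variance `σ² > 0`, `E[exp(x - x²/2 - σ²/2)] ≤ 1`. -/
theorem bercu_touati {Ω : Type*} [MeasureSpace Ω] (μ : Measure Ω) [IsProbabilityMeasure μ]
    (x : Ω → ℝ) (σ2 : ℝ) (hmem : MemLp x 2 μ)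
    (hmean : ∫ ω, x ω ∂μ = 0) (hvar : ∫ ω, (x ω) ^ 2 ∂μ = σ2) (hσ : 0 < σ2) :
    ∫ ω, Real.exp (x ω - (1 / 2) * (x ω) ^ 2 - (1 / 2) * σ2) ∂μ ≤ 1 := by
  have hxm : AEStronglyMeasurable x μ := hmem.aestronglyMeasurable
  have hx1 : Integrable x μ := hmem.integrable one_le_two
  have hx2 : Integrable (fun ω => (x ω) ^ 2) μ := by
    have := hmem.integrable_sq
    simpa [sq] using this
  -- integrand is bounded
  have hcont : Continuous fun t : ℝ => Real.exp (t - (1 / 2) * t ^ 2 - (1 / 2) * σ2) := by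
    fun_prop
  have hm : AEStronglyMeasurable
      (fun ω => Real.exp (x ω - (1 / 2) * (x ω) ^ 2 - (1 / 2) * σ2)) μ :=
    hcont.comp_aestronglyMeasurable hxm
  have hbound : ∀ ω, ‖Real.exp (x ω - (1 / 2) * (x ω) ^ 2 - (1 / 2) * σ2)‖ ≤
      Real.exp (1 / 2) := by
    intro ω
    rw [Real.norm_eq_abs, abs_of_pos (Real.exp_pos _)]
    apply Real.exp_le_exp.2
    nlinarith [sq_nonneg (x ω - 1)]
  have hint : Integrable
      (fun ω => Real.exp (x ω - (1 / 2) * (x ω) ^ 2 - (1 / 2) * σ2)) μ :=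
    Integrable.mono' (integrable_const _) hm (Filter.Eventually.of_forall hbound)
  -- pointwise bound by (1 + x + x²/2) * exp(-σ²/2)
  have hpt : ∀ ω, Real.exp (x ω - (1 / 2) * (x ω) ^ 2 - (1 / 2) * σ2) ≤
      (1 + x ω + (1 / 2) * (x ω) ^ 2) * Real.exp (-(1 / 2) * σ2) := by
    intro ω
    have h := bercu_key (x ω)
    have : Real.exp (x ω - (1 / 2) * (x ω) ^ 2 - (1 / 2) * σ2)
        = Real.exp (x ω - (1 / 2) * (x ω) ^ 2) * Real.exp (-(1 / 2) * σ2) := by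
      rw [← Real.exp_add]; ring_nf
    rw [this]
    exact mul_le_mul_of_nonneg_right h (Real.exp_pos _).le
  have hint2 : Integrable
      (fun ω => (1 + x ω + (1 / 2) * (x ω) ^ 2) * Real.exp (-(1 / 2) * σ2)) μ := by
    apply Integrable.mul_const
    exact ((integrable_const 1).add hx1).add (hx2.const_mul _)
  calc ∫ ω, Real.exp (x ω - (1 / 2) * (x ω) ^ 2 - (1 / 2) * σ2) ∂μ
      ≤ ∫ ω, (1 + x ω + (1 / 2) * (x ω) ^ 2) * Real.exp (-(1 / 2) * σ2) ∂μ :=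
        integral_mono hint hint2 hpt
    _ = (1 + σ2 / 2) * Real.exp (-(1 / 2) * σ2) := by
        rw [integral_mul_const]
        congr 1
        have hi1 : Integrable (fun ω => 1 + x ω) μ := (integrable_const 1).add hx1
        have hi2 : Integrable (fun ω => (1 / 2 : ℝ) * x ω ^ 2) μ := hx2.const_mul _
        rw [integral_add hi1 hi2, integral_add (integrable_const 1) hx1,
          integral_const, integral_const_mul, hmean, hvar]
        simp; ring
    _ ≤ 1 := by
        have h := Real.add_one_le_exp ((1 / 2) * σ2)
        have he : Real.exp (-(1 / 2) * σ2) * Real.exp ((1 / 2) * σ2) = 1 := by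
          rw [← Real.exp_add]; ring_nf; exact Real.exp_zero
        nlinarith [Real.exp_pos (-(1 / 2) * σ2), Real.exp_pos ((1 / 2) * σ2)]
end

section
/- Let $\{\mathcal{F}_\tau\}_{\tau=0}^{t-1}$ be a filtration, and for $\tau = 1, \dots, t-1$ let $X_\tau \in \mathbb{R}^d$ be $\mathcal{F}_\tau$-measurable random vectors with $\|X_\tau\|_2 \le 1$ and $\mathbb{E}[X_\tau \mid \mathcal{F}_{\tau-1}] = 0$. Let $\mu \in \mathbb{R}^d$ with $\|\mu\|_2 \le 1$, define $D(\tau) = X_\tau X_\tau^T - \mathbb{E}[X_\tau X_\tau^T \mid \mathcal{F}_{\tau-1}]$ and $Y_\tau = D(\tau)\mu$, and set $\hat{\Sigma}_t = \sum_{\tau=1}^{t-1} X_\tau X_\tau^T$ and $\Sigma_t = \sum_{\tau=1}^{t-1} \mathbb{E}[X_\tau X_\tau^T \mid \mathcal{F}_{\tau-1}]$. Then for every $\lambda \in \mathbb{R}^d$, $\mathbb{E}\left[\exp\left\{\lambda^T \sum_{\tau=1}^{t-1} \tfrac{1}{\sqrt{2}} Y_\tau - \tfrac{1}{2}\lambda^T(\hat{\Sigma}_t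 + \Sigma_t)\lambda\right\}\right] \le 1$. -/
open MeasureTheory Matrix Finset

attribute [local instance] Matrix.normedAddCommGroup Matrix.normedSpace

namespace MDEaux

noncomputable def matContENorm {d : ℕ} : ContinuousENorm (Matrix (Fin d) (Fin d) ℝ) :=
  SeminormedAddGroup.toContinuousENorm

attribute [local instance] matContENorm
section scalar

/-- `exp (x - x^2/2) ≤ 1 + x + x^2/2` for all real `x`. -/
lemma key_exp (x : ℝ) : Real.exp (x - x^2/2) ≤ 1 + x + x^2/2 := by
  set g : ℝ → ℝ := fun z => (1 + z + z^2/2) * Real.exp (z^2/2 - z) with hg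
  have hderiv : ∀ y : ℝ, HasDerivAt g ((y * (y^2 + y + 2) / 2) * Real.exp (y^2/2 - y)) y := by
    intro y
    have ha : HasDerivAt (fun z : ℝ => z^2) (2*y) y := by simpa using hasDerivAt_pow 2 y
    have h1 : HasDerivAt (fun z : ℝ => 1 + z + z^2/2) (1 + y) y := by
      have hc := ((hasDerivAt_id y).const_add (1:ℝ)).add (ha.div_const (2:ℝ))
      exact hc.congr_deriv (by ring)
    have h2 : HasDerivAt (fun z : ℝ => z^2/2 - z) (y - 1) y := by
      have := (ha.div_const 2).sub (hasDerivAt_id y); exact this.congr_deriv (by ring)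
    have h4 := h1.mul h2.exp
    exact h4.congr_deriv (by ring)
  have hdiff : Differentiable ℝ g := fun y => (hderiv y).differentiableAt
  have hg0 : g 0 = 1 := by simp [hg]
  have hone : 1 ≤ g x := by
    rcases le_total 0 x with hx | hx
    · have hmono : MonotoneOn g (Set.Ici 0) := by
        apply monotoneOn_of_deriv_nonneg (convex_Ici 0) hdiff.continuous.continuousOn
          (fun y _ => (hdiff y).differentiableWithinAt)
        intro y hy
        rw [interior_Ici] at hy
        rw [(hderiv y).deriv]
        have hy0 : (0:ℝ) < y := hy
        have hE := Real.exp_pos (y^2/2 - y)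
        have h1 : 0 ≤ y * (y^2 + y + 2) / 2 := by nlinarith [sq_nonneg y]
        exact mul_nonneg h1 hE.le
      have := hmono (Set.mem_Ici.2 le_rfl) (Set.mem_Ici.2 hx) hx
      rwa [hg0] at this
    · have hanti : AntitoneOn g (Set.Iic 0) := by
        apply antitoneOn_of_deriv_nonpos (convex_Iic 0) hdiff.continuous.continuousOn
          (fun y _ => (hdiff y).differentiableWithinAt)
        intro y hy
        rw [interior_Iic] at hy
        rw [(hderiv y).deriv]
        have hy0 : y < (0:ℝ) := hy
        have hE := Real.exp_pos (y^2/2 - y)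
        have hp : (0:ℝ) < y^2 + y + 2 := by nlinarith [sq_nonneg (y + 1/2)]
        have h1 : y * (y^2 + y + 2) / 2 ≤ 0 := by
          nlinarith [mul_nonpos_of_nonpos_of_nonneg hy0.le hp.le]
        exact mul_nonpos_of_nonpos_of_nonneg h1 hE.le
      have := hanti (Set.mem_Iic.2 hx) (Set.mem_Iic.2 le_rfl) hx
      rwa [hg0] at this
  have hE := Real.exp_pos (x^2/2 - x)
  have hprod : Real.exp (x - x^2/2) * Real.exp (x^2/2 - x) = 1 := by
    rw [← Real.exp_add, show (x - x^2/2) + (x^2/2 - x) = 0 by ring, Real.exp_zero]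
  rw [← mul_le_mul_iff_of_pos_right hE, hprod]
  exact hone

/-- a.e. bounded measurable functions are integrable on finite measure spaces. -/
lemma bddInt {Ω : Type*} {m0 : MeasurableSpace Ω} {P : Measure Ω} [IsFiniteMeasure P]
    {f : Ω → ℝ} {c : ℝ} (hf : AEStronglyMeasurable f P) (h : ∀ᵐ ω ∂P, |f ω| ≤ c) :
    Integrable f P :=
  Integrable.mono' (integrable_const c) hf (by simpa [Real.norm_eq_abs] using h)

/-- One-step exponential supermartingale bound (de la Peña style). -/
lemma step_bound {Ω : Type*} {m m0 : MeasurableSpace Ω} (hm : m ≤ m0) (P : Measure Ω)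
    [IsProbabilityMeasure P] {W V : Ω → ℝ} {C : ℝ}
    (hWm : StronglyMeasurable[m0] W) (hVm : StronglyMeasurable[m0] V)
    (hWb : ∀ᵐ ω ∂P, |W ω| ≤ C) (hVb : ∀ᵐ ω ∂P, |V ω| ≤ C)
    (hW0 : P[W|m] =ᵐ[P] 0)
    (hQV : ∀ᵐ ω ∂P, W ω ^ 2 + (P[fun ω' => W ω' ^ 2|m]) ω ≤ 2 * V ω) :
    ∀ᵐ ω ∂P, (P[fun ω' => Real.exp (W ω' - V ω')|m]) ω ≤ 1 := by
  set q : Ω → ℝ := P[fun ω' => W ω' ^ 2|m] with hq_def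
  have hq_meas : StronglyMeasurable[m] q := stronglyMeasurable_condExp
  have hW2m : StronglyMeasurable (fun ω => W ω ^ 2) := (continuous_pow 2).comp_stronglyMeasurable hWm
  have hW2half : StronglyMeasurable (fun ω => W ω ^ 2 / 2) := by
    have := hW2m.mul (stronglyMeasurable_const (b := (2:ℝ)⁻¹))
    simpa [div_eq_mul_inv, Pi.mul_def] using this
  have hWint : Integrable W P := bddInt hWm.aestronglyMeasurable hWb
  have hW2int : Integrable (fun ω => W ω ^ 2) P := by
    refine bddInt (c := C^2) hW2m.aestronglyMeasurable ?_
    filter_upwards [hWb] with ω h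
    rw [abs_pow]
    exact pow_le_pow_left₀ (abs_nonneg _) h 2
  have hq0 : ∀ᵐ ω ∂P, 0 ≤ q ω := condExp_nonneg (Filter.Eventually.of_forall fun ω => sq_nonneg _)
  have hqC : ∀ᵐ ω ∂P, q ω ≤ C ^ 2 := by
    have h1 : P[fun ω' => W ω' ^ 2|m] ≤ᵐ[P] P[fun _ => C ^ 2|m] := by
      refine condExp_mono hW2int (integrable_const _) ?_
      filter_upwards [hWb] with ω h
      calc W ω ^ 2 = |W ω| ^ 2 := (sq_abs _).symm
        _ ≤ C ^ 2 := pow_le_pow_left₀ (abs_nonneg _) h 2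
    have h2 : P[fun _ : Ω => C ^ 2|m] = fun _ => C ^ 2 := condExp_const hm _
    filter_upwards [h1] with ω h
    simpa [h2] using h
  -- functions
  set g1 : Ω → ℝ := fun ω => Real.exp (W ω - V ω) with hg1_def
  set g3 : Ω → ℝ := fun ω => Real.exp (W ω - W ω ^ 2 / 2) with hg3_def
  set e : Ω → ℝ := fun ω => Real.exp ((-1/2) * q ω) with he_def
  have hg1m : StronglyMeasurable g1 :=
    Real.continuous_exp.comp_stronglyMeasurable (hWm.sub hVm)
  have hg3m : StronglyMeasurable g3 :=
    Real.continuous_exp.comp_stronglyMeasurable (hWm.sub hW2half)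
  have hem : StronglyMeasurable[m] e :=
    Real.continuous_exp.comp_stronglyMeasurable (hq_meas.const_mul (-1/2))
  have hg1int : Integrable g1 P := by
    refine bddInt hg1m.aestronglyMeasurable (c := Real.exp (2*C)) ?_
    filter_upwards [hWb, hVb] with ω h1 h2
    rw [Real.abs_exp]
    apply Real.exp_le_exp.2
    have := abs_le.1 h1; have := abs_le.1 h2
    linarith
  have hg3int : Integrable g3 P := by
    refine bddInt hg3m.aestronglyMeasurable (c := Real.exp C) ?_
    filter_upwards [hWb] with ω h1
    rw [Real.abs_exp]
    apply Real.exp_le_exp.2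
    have := abs_le.1 h1
    nlinarith [sq_nonneg (W ω)]
  have heg3int : Integrable (e * g3) P := by
    refine bddInt (((hem.mono hm).mul hg3m).aestronglyMeasurable) (c := Real.exp C) ?_
    filter_upwards [hWb, hq0] with ω h1 h2
    have he1 : e ω ≤ 1 := by
      rw [he_def]
      apply Real.exp_le_one_iff.2
      nlinarith
    have he0 : 0 ≤ e ω := le_of_lt (Real.exp_pos _)
    have hg3pos : 0 < g3 ω := Real.exp_pos _
    have hg3le : g3 ω ≤ Real.exp C := by
      apply Real.exp_le_exp.2
      have := abs_le.1 h1
      nlinarith [sq_nonneg (W ω)]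
    rw [Pi.mul_apply, abs_mul, abs_of_nonneg he0, abs_of_pos hg3pos]
    nlinarith [Real.exp_pos C]
  -- step 1 : g1 ≤ e * g3 a.e.
  have chain1 : g1 ≤ᵐ[P] e * g3 := by
    filter_upwards [hQV] with ω h
    rw [Pi.mul_apply, he_def, hg3_def, hg1_def, ← Real.exp_add]
    apply Real.exp_le_exp.2
    rw [hq_def]
    linarith
  have step1 : P[g1|m] ≤ᵐ[P] P[e * g3|m] := condExp_mono hg1int heg3int chain1
  -- pull out
  have pullout : P[e * g3|m] =ᵐ[P] e * P[g3|m] :=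
    condExp_mul_of_stronglyMeasurable_left hem heg3int hg3int
  -- inner bound
  have hrhsint : Integrable (fun ω => 1 + W ω + W ω ^ 2 / 2) P := by
    refine bddInt ?_ (c := 1 + C + C^2/2) ?_
    · exact ((stronglyMeasurable_const.add hWm).add hW2half).aestronglyMeasurable
    · filter_upwards [hWb] with ω h
      have h' := abs_le.1 h
      have : W ω ^ 2 ≤ C ^ 2 := by
        rw [← sq_abs]; exact pow_le_pow_left₀ (abs_nonneg _) h 2
      rw [abs_le]; constructor <;> nlinarith
  have inner1 : P[g3|m] ≤ᵐ[P] P[fun ω => 1 + W ω + W ω ^ 2 / 2|m] :=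
    condExp_mono hg3int hrhsint (Filter.Eventually.of_forall fun ω => key_exp (W ω))
  have inner2 : P[fun ω => 1 + W ω + W ω ^ 2 / 2|m] =ᵐ[P] fun ω => 1 + (P[W|m]) ω + q ω / 2 := by
    have hsplit : (fun ω => 1 + W ω + W ω ^ 2 / 2) =
        (fun _ : Ω => (1:ℝ)) + (W + (2:ℝ)⁻¹ • fun ω => W ω ^ 2) := by
      funext ω; simp [Pi.add_apply, Pi.smul_apply, smul_eq_mul]; ring
    rw [hsplit]
    have h1 := condExp_add (μ := P) (m := m) (integrable_const (1:ℝ))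
      (hWint.add (hW2int.smul (2:ℝ)⁻¹))
    refine h1.trans ?_
    have h2 := condExp_add (μ := P) (m := m) hWint (hW2int.smul (2:ℝ)⁻¹)
    have h3 := condExp_smul (μ := P) (m := m) ((2:ℝ)⁻¹) (fun ω => W ω ^ 2)
    have h4 : P[fun _ : Ω => (1:ℝ)|m] = fun _ => (1:ℝ) := condExp_const hm _
    filter_upwards [h2, h3] with ω h2ω h3ω
    simp only [Pi.add_apply, h4, h2ω, Pi.smul_apply, smul_eq_mul]
    rw [h3ω]
    simp only [Pi.smul_apply, smul_eq_mul, ← hq_def]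
    ring
  -- assemble
  filter_upwards [step1, pullout, inner1, inner2, hW0, hq0] with ω h1 h2 h3 h4 h5 h6
  have hfinal : (P[g1|m]) ω ≤ e ω * (1 + q ω / 2) := by
    have he0 : 0 ≤ e ω := le_of_lt (Real.exp_pos _)
    have : (P[g3|m]) ω ≤ 1 + q ω / 2 := by
      rw [h4] at h3
      simpa [h5] using h3
    calc (P[g1|m]) ω ≤ (P[e * g3|m]) ω := h1
      _ = e ω * (P[g3|m]) ω := h2
      _ ≤ e ω * (1 + q ω / 2) := mul_le_mul_of_nonneg_left this he0
  have : e ω * (1 + q ω / 2) ≤ 1 := by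
    have h7 : 1 + q ω / 2 ≤ Real.exp (q ω / 2) := by
      have := Real.add_one_le_exp (q ω / 2); linarith
    have he0 : 0 ≤ e ω := le_of_lt (Real.exp_pos _)
    calc e ω * (1 + q ω / 2) ≤ e ω * Real.exp (q ω / 2) :=
          mul_le_mul_of_nonneg_left h7 he0
      _ = 1 := by
          rw [he_def]; dsimp only
          rw [← Real.exp_add, show (-1/2) * q ω + q ω / 2 = 0 by ring, Real.exp_zero]
  linarith

end scalar

variable {d : ℕ}

/-- The bilinear functional `M ↦ u ⬝ᵥ M.mulVec v` as a continuous linear map. -/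
noncomputable def bilinCLM (u v : Fin d → ℝ) : Matrix (Fin d) (Fin d) ℝ →L[ℝ] ℝ :=
  LinearMap.toContinuousLinearMap
    { toFun := fun M => u ⬝ᵥ M.mulVec v
      map_add' := fun M N => by simp [Matrix.add_mulVec, dotProduct_add]
      map_smul' := fun c M => by
        simp [smul_mulVec, dotProduct_smul, smul_eq_mul] }

@[simp] lemma bilinCLM_apply (u v : Fin d → ℝ) (M : Matrix (Fin d) (Fin d) ℝ) :
    bilinCLM u v M = u ⬝ᵥ M.mulVec v := rfl

/-- Conditional expectation commutes with the bilinear functional. -/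
lemma condexp_bilin {Ω : Type*} {m m0 : MeasurableSpace Ω} (hm : m ≤ m0) {P : Measure Ω}
    [IsProbabilityMeasure P] {f : Ω → Matrix (Fin d) (Fin d) ℝ}
    (hf : Integrable f P) (u v : Fin d → ℝ) :
    (fun ω => u ⬝ᵥ ((P[f|m]) ω).mulVec v) =ᵐ[P] P[fun ω => u ⬝ᵥ (f ω).mulVec v|m] := by
  have hfL : Integrable (fun ω => bilinCLM u v (f ω)) P := (bilinCLM u v).integrable_comp hf
  have h := ae_eq_condExp_of_forall_setIntegral_eq hm hfL
    (fun s _ _ => ((bilinCLM u v).integrable_comp (integrable_condExp (f := f))).integrableOn)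
    (fun s hs _ => by
      rw [(bilinCLM u v).integral_comp_comm integrable_condExp.integrableOn,
        setIntegral_condExp hm hf hs,
        ← (bilinCLM u v).integral_comp_comm hf.integrableOn]
      rfl)
    (((bilinCLM u v).continuous.comp_stronglyMeasurable
      (stronglyMeasurable_condExp (f := f))).aestronglyMeasurable)
  exact h


variable {d : ℕ}

lemma dot_self_nonneg (u : Fin d → ℝ) : 0 ≤ u ⬝ᵥ u :=
  Finset.sum_nonneg fun i _ => mul_self_nonneg _

lemma dot_sq_le (u v : Fin d → ℝ) : (u ⬝ᵥ v)^2 ≤ (u ⬝ᵥ u) * (v ⬝ᵥ v) := by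
  simpa [dotProduct, sq] using Finset.sum_mul_sq_le_sq_mul_sq Finset.univ u v

lemma abs_dot_le {u v : Fin d → ℝ} {L : ℝ} (hL : 0 ≤ L) (h : (u ⬝ᵥ v)^2 ≤ L^2) :
    |u ⬝ᵥ v| ≤ L := by
  have := sq_abs (u ⬝ᵥ v)
  nlinarith [abs_nonneg (u ⬝ᵥ v), sq_nonneg (|u ⬝ᵥ v| - L)]

lemma bilin_vecMulVec (u x y w : Fin d → ℝ) :
    u ⬝ᵥ (vecMulVec x y).mulVec w = (u ⬝ᵥ x) * (y ⬝ᵥ w) := by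
  simp only [Matrix.mulVec, dotProduct, Matrix.vecMulVec_apply, Finset.mul_sum,
    Finset.sum_mul, Finset.sum_mul_sum]
  rw [Finset.sum_comm]
  refine Finset.sum_congr rfl fun i _ => Finset.sum_congr rfl fun j _ => by ring

lemma dot_sum {d : ℕ} (u : Fin d → ℝ) {ι : Type*} (s : Finset ι) (f : ι → Fin d → ℝ) :
    u ⬝ᵥ (∑ i ∈ s, f i) = ∑ i ∈ s, u ⬝ᵥ f i := by
  classical
  induction s using Finset.induction_on with
  | empty => simp
  | insert _ _ h ih => rw [Finset.sum_insert h, Finset.sum_insert h, dotProduct_add, ih]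

lemma sum_mulVec' {d : ℕ} {ι : Type*} (s : Finset ι) (f : ι → Matrix (Fin d) (Fin d) ℝ)
    (v : Fin d → ℝ) : (∑ i ∈ s, f i).mulVec v = ∑ i ∈ s, (f i).mulVec v := by
  classical
  induction s using Finset.induction_on with
  | empty => simp [Matrix.zero_mulVec]
  | insert _ _ h ih => rw [Finset.sum_insert h, Finset.sum_insert h, Matrix.add_mulVec, ih]

lemma continuous_dot_left (u : Fin d → ℝ) : Continuous fun v : Fin d → ℝ => u ⬝ᵥ v := by
  show Continuous fun v : Fin d → ℝ => ∑ i, u i * v i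
  exact continuous_finset_sum _ fun i _ => continuous_const.mul (continuous_apply i)

lemma continuous_dot_right (u : Fin d → ℝ) : Continuous fun v : Fin d → ℝ => v ⬝ᵥ u := by
  show Continuous fun v : Fin d → ℝ => ∑ i, v i * u i
  exact continuous_finset_sum _ fun i _ => (continuous_apply i).mul continuous_const


set_option maxHeartbeats 1600000 in
lemma one_step {Ω : Type*} {m0 : MeasurableSpace Ω} (P : Measure Ω) [IsProbabilityMeasure P]
    {d : ℕ} {m m' : MeasurableSpace Ω} (hm' : m' ≤ m0) (hmm' : m ≤ m')
    {X : Ω → Fin d → ℝ} (hXmeas : StronglyMeasurable[m'] X)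
    (hXb : ∀ ω, X ω ⬝ᵥ X ω ≤ 1)
    (μv lam : Fin d → ℝ) (hμv : μv ⬝ᵥ μv ≤ 1)
    (W V : Ω → ℝ)
    (hW : ∀ ω, W ω = (1 / Real.sqrt 2) * (lam ⬝ᵥ ((vecMulVec (X ω) (X ω) -
        (P[fun ω' => vecMulVec (X ω') (X ω') | m]) ω).mulVec μv)))
    (hV : ∀ ω, V ω = (1/2) * (lam ⬝ᵥ ((vecMulVec (X ω) (X ω) +
        (P[fun ω' => vecMulVec (X ω') (X ω') | m]) ω).mulVec lam))) :
    StronglyMeasurable[m'] W ∧ StronglyMeasurable[m'] V ∧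
    (∀ᵐ ω ∂P, |W ω| ≤ 2 * Real.sqrt (lam ⬝ᵥ lam) + lam ⬝ᵥ lam + 1) ∧
    (∀ᵐ ω ∂P, |V ω| ≤ 2 * Real.sqrt (lam ⬝ᵥ lam) + lam ⬝ᵥ lam + 1) ∧
    (∀ᵐ ω ∂P, (P[fun ω' => Real.exp (W ω' - V ω')|m]) ω ≤ 1) := by
  have hm : m ≤ m0 := hmm'.trans hm'
  set L := Real.sqrt (lam ⬝ᵥ lam) with hL_def
  have hL0 : 0 ≤ L := Real.sqrt_nonneg _
  have hL2 : L^2 = lam ⬝ᵥ lam := Real.sq_sqrt (dot_self_nonneg lam)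
  set C0 := 2 * L + lam ⬝ᵥ lam + 1 with hC0_def
  have hXabs : ∀ ω i, |X ω i| ≤ 1 := by
    intro ω i
    have h1 : X ω i * X ω i ≤ X ω ⬝ᵥ X ω :=
      Finset.single_le_sum (f := fun j => X ω j * X ω j)
        (fun j _ => mul_self_nonneg _) (Finset.mem_univ i)
    nlinarith [sq_nonneg (|X ω i| - 1), sq_abs (X ω i), abs_nonneg (X ω i), hXb ω]
  have haX : ∀ ω, |lam ⬝ᵥ X ω| ≤ L := by
    intro ω
    refine abs_dot_le hL0 ?_
    calc (lam ⬝ᵥ X ω)^2 ≤ (lam ⬝ᵥ lam) * (X ω ⬝ᵥ X ω) := dot_sq_le _ _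
      _ ≤ (lam ⬝ᵥ lam) * 1 := mul_le_mul_of_nonneg_left (hXb ω) (dot_self_nonneg lam)
      _ = L^2 := by rw [mul_one, hL2]
  have haX2 : ∀ ω, (lam ⬝ᵥ X ω)^2 ≤ lam ⬝ᵥ lam := by
    intro ω
    nlinarith [haX ω, abs_nonneg (lam ⬝ᵥ X ω), sq_abs (lam ⬝ᵥ X ω)]
  have haμ : ∀ ω, |X ω ⬝ᵥ μv| ≤ 1 := by
    intro ω
    refine abs_dot_le zero_le_one ?_
    calc (X ω ⬝ᵥ μv)^2 ≤ (X ω ⬝ᵥ X ω) * (μv ⬝ᵥ μv) := dot_sq_le _ _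
      _ ≤ 1^2 := by nlinarith [dot_self_nonneg (X ω), dot_self_nonneg μv, hXb ω]
  set vv : Ω → Matrix (Fin d) (Fin d) ℝ := fun ω => vecMulVec (X ω) (X ω) with hvv_def
  have hvv_meas : StronglyMeasurable[m'] vv := by
    have hc : Continuous (fun v : Fin d → ℝ => vecMulVec v v) :=
      continuous_matrix fun i j => by
        simpa [Matrix.vecMulVec_apply, Pi.mul_def] using (continuous_apply i).mul (continuous_apply j)
    exact hc.comp_stronglyMeasurable hXmeas
  have hvv_int : Integrable vv P := by
    refine Integrable.mono' (integrable_const (1:ℝ)) (hvv_meas.mono hm').aestronglyMeasurable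
      (Filter.Eventually.of_forall fun ω => ?_)
    refine (Matrix.norm_le_iff zero_le_one).2 fun i j => ?_
    simp only [hvv_def]
    rw [Matrix.vecMulVec_apply, Real.norm_eq_abs, abs_mul]
    exact mul_le_one₀ (hXabs ω i) (abs_nonneg _) (hXabs ω j)
  set A : Ω → Matrix (Fin d) (Fin d) ℝ := P[vv | m] with hA_def
  set a : Ω → ℝ := fun ω => (lam ⬝ᵥ X ω) * (X ω ⬝ᵥ μv) with ha_def
  set b : Ω → ℝ := fun ω => lam ⬝ᵥ (A ω).mulVec μv with hb_def
  set c : Ω → ℝ := fun ω => lam ⬝ᵥ (A ω).mulVec lam with hc_def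
  -- condexp commutation
  have hba : b =ᵐ[P] P[a|m] := by
    have h := condexp_bilin hm hvv_int lam μv
    have heq : (fun ω => lam ⬝ᵥ (vv ω).mulVec μv) = a := by
      funext ω; rw [ha_def]; exact bilin_vecMulVec lam (X ω) (X ω) μv
    rw [heq] at h
    exact h
  have hca : c =ᵐ[P] P[fun ω => (lam ⬝ᵥ X ω)^2|m] := by
    have h := condexp_bilin hm hvv_int lam lam
    have heq : (fun ω => lam ⬝ᵥ (vv ω).mulVec lam) = fun ω => (lam ⬝ᵥ X ω)^2 := by
      funext ω
      rw [bilin_vecMulVec lam (X ω) (X ω) lam, dotProduct_comm (X ω) lam]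
      ring
    rw [heq] at h
    exact h
  -- measurability and integrability
  have ha_meas' : StronglyMeasurable[m'] a :=
    ((continuous_dot_left lam).comp_stronglyMeasurable hXmeas).mul
      ((continuous_dot_right μv).comp_stronglyMeasurable hXmeas)
  have hb_measm : StronglyMeasurable[m] b :=
    (bilinCLM lam μv).continuous.comp_stronglyMeasurable stronglyMeasurable_condExp
  have hc_measm : StronglyMeasurable[m] c :=
    (bilinCLM lam lam).continuous.comp_stronglyMeasurable stronglyMeasurable_condExp
  have hlamX_meas' : StronglyMeasurable[m'] (fun ω => (lam ⬝ᵥ X ω)^2) :=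
    (continuous_pow 2).comp_stronglyMeasurable
      ((continuous_dot_left lam).comp_stronglyMeasurable hXmeas)
  have ha_abs : ∀ ω, |a ω| ≤ L := by
    intro ω
    rw [ha_def, abs_mul]
    calc |lam ⬝ᵥ X ω| * |X ω ⬝ᵥ μv| ≤ L * 1 :=
          mul_le_mul (haX ω) (haμ ω) (abs_nonneg _) hL0
      _ = L := mul_one L
  have ha_int : Integrable a P :=
    bddInt (ha_meas'.mono hm').aestronglyMeasurable (Filter.Eventually.of_forall ha_abs)
  have ha2_int : Integrable (fun ω => a ω^2) P := by
    refine bddInt (c := L^2)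
      ((continuous_pow 2).comp_stronglyMeasurable (ha_meas'.mono hm')).aestronglyMeasurable
      (Filter.Eventually.of_forall fun ω => ?_)
    rw [abs_pow]
    exact pow_le_pow_left₀ (abs_nonneg _) (ha_abs ω) 2
  have hlamX2_int : Integrable (fun ω => (lam ⬝ᵥ X ω)^2) P := by
    refine bddInt (c := lam ⬝ᵥ lam) (hlamX_meas'.mono hm').aestronglyMeasurable
      (Filter.Eventually.of_forall fun ω => ?_)
    rw [abs_of_nonneg (sq_nonneg _)]
    exact haX2 ω
  have hb_bound : ∀ᵐ ω ∂P, |b ω| ≤ L := by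
    have h1 : P[a|m] ≤ᵐ[P] P[fun _ => L|m] :=
      condExp_mono ha_int (integrable_const _)
        (Filter.Eventually.of_forall fun ω => (abs_le.1 (ha_abs ω)).2)
    have h2 : P[fun _ => -L|m] ≤ᵐ[P] P[a|m] :=
      condExp_mono (integrable_const _) ha_int
        (Filter.Eventually.of_forall fun ω => (abs_le.1 (ha_abs ω)).1)
    rw [condExp_const hm] at h1
    rw [condExp_const hm] at h2
    filter_upwards [h1, h2, hba] with ω e1 e2 e3
    rw [abs_le]
    exact ⟨by rw [e3]; exact e2, by rw [e3]; exact e1⟩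
  have hb_int : Integrable b P := bddInt (hb_measm.mono hm).aestronglyMeasurable hb_bound
  have hc_bound : ∀ᵐ ω ∂P, 0 ≤ c ω ∧ c ω ≤ lam ⬝ᵥ lam := by
    have h0 : (0 : Ω → ℝ) ≤ᵐ[P] P[fun ω => (lam ⬝ᵥ X ω)^2|m] :=
      condExp_nonneg (Filter.Eventually.of_forall fun ω => sq_nonneg _)
    have h1 : P[fun ω => (lam ⬝ᵥ X ω)^2|m] ≤ᵐ[P] P[fun _ => lam ⬝ᵥ lam|m] :=
      condExp_mono hlamX2_int (integrable_const _) (Filter.Eventually.of_forall haX2)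
    rw [condExp_const hm] at h1
    filter_upwards [h0, h1, hca] with ω e0 e1 e2
    rw [e2]
    exact ⟨e0, e1⟩
  -- rewriting W and V
  have hW_ab : ∀ ω, W ω = (1 / Real.sqrt 2) * (a ω - b ω) := by
    intro ω
    rw [hW ω, Matrix.sub_mulVec, dotProduct_sub, ha_def, hb_def,
      bilin_vecMulVec lam (X ω) (X ω) μv]
  have hV_ab : ∀ ω, V ω = (1/2) * ((lam ⬝ᵥ X ω)^2 + c ω) := by
    intro ω
    rw [hV ω, Matrix.add_mulVec, dotProduct_add, hc_def,
      bilin_vecMulVec lam (X ω) (X ω) lam, dotProduct_comm (X ω) lam]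
    ring
  have hW_meas' : StronglyMeasurable[m'] W := by
    have : W = fun ω => (1 / Real.sqrt 2) * (a ω - b ω) := funext hW_ab
    rw [this]
    exact (ha_meas'.sub (hb_measm.mono hmm')).const_mul _
  have hV_meas' : StronglyMeasurable[m'] V := by
    have : V = fun ω => (1/2) * ((lam ⬝ᵥ X ω)^2 + c ω) := funext hV_ab
    rw [this]
    exact (hlamX_meas'.add (hc_measm.mono hmm')).const_mul _
  have hs2 : Real.sqrt 2 ^ 2 = 2 := Real.sq_sqrt (by norm_num)
  have hs2one : 1 ≤ Real.sqrt 2 := by nlinarith [Real.sqrt_nonneg 2]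
  have hW_bound : ∀ᵐ ω ∂P, |W ω| ≤ C0 := by
    filter_upwards [hb_bound] with ω h
    rw [hW_ab ω, abs_mul]
    have h1 : |1 / Real.sqrt 2| ≤ 1 := by
      rw [abs_of_nonneg (by positivity)]
      rw [div_le_one (by positivity)]
      exact hs2one
    have h2 : |a ω - b ω| ≤ 2 * L := by
      calc |a ω - b ω| ≤ |a ω| + |b ω| := abs_sub _ _
        _ ≤ L + L := add_le_add (ha_abs ω) h
        _ = 2 * L := by ring
    calc |1 / Real.sqrt 2| * |a ω - b ω| ≤ 1 * (2 * L) :=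
          mul_le_mul h1 h2 (abs_nonneg _) zero_le_one
      _ ≤ C0 := by rw [hC0_def]; nlinarith [dot_self_nonneg lam]
  have hV_bound : ∀ᵐ ω ∂P, |V ω| ≤ C0 := by
    filter_upwards [hc_bound] with ω h
    have hz0 : 0 ≤ (lam ⬝ᵥ X ω)^2 + c ω := add_nonneg (sq_nonneg _) h.1
    rw [hV_ab ω, abs_of_nonneg (by linarith)]
    rw [hC0_def]
    nlinarith [haX2 ω, dot_self_nonneg lam, h.2]
  -- conditional mean zero
  have hW0 : P[W|m] =ᵐ[P] 0 := by
    have hWfun : W = (1 / Real.sqrt 2 : ℝ) • (a - b) := by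
      funext ω
      rw [hW_ab ω]
      simp [Pi.smul_apply, Pi.sub_apply, smul_eq_mul]
    have h1 := condExp_smul (μ := P) (m := m) (1 / Real.sqrt 2 : ℝ) (a - b)
    have h2 := condExp_sub (μ := P) (m := m) ha_int hb_int
    have h3 : P[b|m] = b := condExp_of_stronglyMeasurable hm hb_measm hb_int
    rw [hWfun]
    filter_upwards [h1, h2, hba] with ω e1 e2 e3
    rw [e1]
    simp only [Pi.smul_apply, smul_eq_mul, Pi.zero_apply]
    rw [e2]
    simp only [Pi.sub_apply, h3]
    rw [← e3]
    ring
  -- second moment identity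
  set g : Ω → ℝ := fun ω => 2 * a ω - b ω with hg_def
  have hg_meas : StronglyMeasurable[m'] g := ((ha_meas'.const_mul 2).sub (hb_measm.mono hmm'))
  have hg_bound : ∀ᵐ ω ∂P, |g ω| ≤ 3 * L := by
    filter_upwards [hb_bound] with ω h
    simp only [hg_def]
    have := ha_abs ω
    have h1 := abs_le.1 this
    have h2 := abs_le.1 h
    rw [abs_le]
    constructor <;> nlinarith
  have hg_int : Integrable g P := bddInt (hg_meas.mono hm').aestronglyMeasurable hg_bound
  have hbg_int : Integrable (b * g) P := by
    refine bddInt (c := 3 * L^2) (((hb_measm.mono hm).mul (hg_meas.mono hm')).aestronglyMeasurable) ?_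
    filter_upwards [hb_bound, hg_bound] with ω h1 h2
    rw [Pi.mul_apply, abs_mul]
    calc |b ω| * |g ω| ≤ L * (3 * L) :=
          mul_le_mul h1 h2 (abs_nonneg _) hL0
      _ = 3 * L^2 := by ring
  have hsq_int : Integrable (fun ω => (a ω - b ω)^2) P := by
    refine bddInt (c := (2*L)^2)
      ((continuous_pow 2).comp_stronglyMeasurable
        ((ha_meas'.mono hm').sub (hb_measm.mono hm))).aestronglyMeasurable ?_
    filter_upwards [hb_bound] with ω h
    rw [abs_pow]
    refine pow_le_pow_left₀ (abs_nonneg _) ?_ 2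
    calc |a ω - b ω| ≤ |a ω| + |b ω| := abs_sub _ _
      _ ≤ L + L := add_le_add (ha_abs ω) h
      _ = 2 * L := by ring
  set r : Ω → ℝ := P[fun ω => a ω^2|m] with hr_def
  have h1 : P[fun ω => (a ω - b ω)^2|m] =ᵐ[P] P[fun ω => a ω^2|m] - P[b * g|m] := by
    have hsplit : (fun ω => (a ω - b ω)^2) = (fun ω => a ω^2) - b * g := by
      funext ω
      simp only [Pi.sub_apply, Pi.mul_apply, hg_def]
      ring
    rw [hsplit]
    exact condExp_sub ha2_int hbg_int m
  have h2 : P[b * g|m] =ᵐ[P] b * P[g|m] :=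
    condExp_mul_of_stronglyMeasurable_left hb_measm hbg_int hg_int
  have h3 : P[g|m] =ᵐ[P] fun ω => 2 * (P[a|m]) ω - b ω := by
    have hgfun : g = (2:ℝ) • a - b := by
      funext ω
      simp [hg_def, Pi.sub_apply, Pi.smul_apply, smul_eq_mul]
    have e1 := condExp_sub (μ := P) (m := m) (ha_int.smul (2:ℝ)) hb_int
    have e2 := condExp_smul (μ := P) (m := m) (2:ℝ) a
    have e3 : P[b|m] = b := condExp_of_stronglyMeasurable hm hb_measm hb_int
    rw [hgfun]
    filter_upwards [e1, e2] with ω f1 f2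
    rw [f1]
    simp only [Pi.sub_apply, Pi.smul_apply, smul_eq_mul, e3, f2]
  have hid : P[fun ω => (a ω - b ω)^2|m] =ᵐ[P] fun ω => r ω - b ω^2 := by
    filter_upwards [h1, h2, h3, hba] with ω e1 e2 e3 e4
    rw [e1]
    simp only [Pi.sub_apply]
    rw [hr_def, e2]
    simp only [Pi.mul_apply]
    rw [e3]
    rw [← e4]
    ring
  have hpos : (0 : Ω → ℝ) ≤ᵐ[P] P[fun ω => (a ω - b ω)^2|m] :=
    condExp_nonneg (Filter.Eventually.of_forall fun ω => sq_nonneg _)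
  have hjensen : ∀ᵐ ω ∂P, b ω^2 ≤ r ω := by
    filter_upwards [hid, hpos] with ω e1 e2
    have : (0:ℝ) ≤ r ω - b ω^2 := by rw [← e1]; exact e2
    linarith
  have hr_le : ∀ᵐ ω ∂P, r ω ≤ c ω := by
    have ha2pt : ∀ ω, a ω^2 ≤ (lam ⬝ᵥ X ω)^2 := by
      intro ω
      rw [ha_def, mul_pow]
      have h5 : (X ω ⬝ᵥ μv)^2 ≤ 1 := by
        nlinarith [haμ ω, abs_nonneg (X ω ⬝ᵥ μv), sq_abs (X ω ⬝ᵥ μv)]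
      nlinarith [sq_nonneg (lam ⬝ᵥ X ω)]
    have h6 : P[fun ω => a ω^2|m] ≤ᵐ[P] P[fun ω => (lam ⬝ᵥ X ω)^2|m] :=
      condExp_mono ha2_int hlamX2_int (Filter.Eventually.of_forall ha2pt)
    filter_upwards [h6, hca] with ω e1 e2
    rw [hr_def, e2]
    exact e1
  have hWsq : (fun ω => W ω^2) = (2:ℝ)⁻¹ • fun ω => (a ω - b ω)^2 := by
    funext ω
    rw [hW_ab ω]
    simp only [Pi.smul_apply, smul_eq_mul]
    rw [mul_pow, div_pow, one_pow, hs2]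
    ring
  have hq : ∀ᵐ ω ∂P, (P[fun ω' => W ω'^2|m]) ω = (r ω - b ω^2)/2 := by
    have hq2 : P[fun ω' => W ω'^2|m] = P[(2:ℝ)⁻¹ • fun ω => (a ω - b ω)^2|m] := by rw [hWsq]
    have hq3 := condExp_smul (μ := P) (m := m) ((2:ℝ)⁻¹) (fun ω => (a ω - b ω)^2)
    filter_upwards [hq3, hid] with ω e1 e2
    rw [hq2, e1]
    simp only [Pi.smul_apply, smul_eq_mul]
    rw [e2]
    ring
  have hQV : ∀ᵐ ω ∂P, W ω ^ 2 + (P[fun ω' => W ω' ^ 2|m]) ω ≤ 2 * V ω := by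
    have ha2pt : ∀ ω, a ω^2 ≤ (lam ⬝ᵥ X ω)^2 := by
      intro ω
      rw [ha_def, mul_pow]
      have h5 : (X ω ⬝ᵥ μv)^2 ≤ 1 := by
        nlinarith [haμ ω, abs_nonneg (X ω ⬝ᵥ μv), sq_abs (X ω ⬝ᵥ μv)]
      nlinarith [sq_nonneg (lam ⬝ᵥ X ω)]
    filter_upwards [hq, hjensen, hr_le] with ω e1 e2 e3
    have hWsq' : W ω^2 = (a ω - b ω)^2 / 2 := by
      have := congrFun hWsq ω
      simp only [Pi.smul_apply, smul_eq_mul] at this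
      rw [this]; ring
    rw [e1, hWsq', hV_ab ω]
    nlinarith [sq_nonneg (a ω + b ω), ha2pt ω]
  refine ⟨hW_meas', hV_meas', hW_bound, hV_bound, ?_⟩
  exact step_bound hm P (hW_meas'.mono hm') (hV_meas'.mono hm') hW_bound hV_bound hW0 hQV

end MDEaux


/-- Lemma 4.4 of the paper: exponential supermartingale bound for the matrix-deviation
process `Y_τ = D(τ)μ` where `D(τ) = X_τX_τᵀ - E[X_τX_τᵀ | ℱ_{τ-1}]`. -/
theorem matrix_deviation_exponential {Ω : Type*} {m0 : MeasurableSpace Ω}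
    (P : Measure Ω) [IsProbabilityMeasure P] {d t : ℕ}
    (ℱ : Filtration ℕ m0) (X : ℕ → Ω → Fin d → ℝ)
    (hXmeas : ∀ τ, 1 ≤ τ → StronglyMeasurable[ℱ τ] (X τ))
    (hXbdd : ∀ τ, 1 ≤ τ → ∀ ω, Real.sqrt (X τ ω ⬝ᵥ X τ ω) ≤ 1)
    (hXmean : ∀ τ, 1 ≤ τ → P[X τ | ℱ (τ - 1)] =ᵐ[P] 0)
    (μ : Fin d → ℝ) (hμ : Real.sqrt (μ ⬝ᵥ μ) ≤ 1)
    (D : ℕ → Ω → Matrix (Fin d) (Fin d) ℝ)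
    (hD : ∀ τ ω, D τ ω = vecMulVec (X τ ω) (X τ ω) -
      (P[fun ω' => vecMulVec (X τ ω') (X τ ω') | ℱ (τ - 1)]) ω)
    (Y : ℕ → Ω → Fin d → ℝ) (hY : ∀ τ ω, Y τ ω = (D τ ω).mulVec μ)
    (Shat Sbar : Ω → Matrix (Fin d) (Fin d) ℝ)
    (hShat : ∀ ω, Shat ω = ∑ τ ∈ Icc 1 (t - 1), vecMulVec (X τ ω) (X τ ω))
    (hSbar : ∀ ω, Sbar ω = ∑ τ ∈ Icc 1 (t - 1),
      (P[fun ω' => vecMulVec (X τ ω') (X τ ω') | ℱ (τ - 1)]) ω)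
    (lam : Fin d → ℝ) :
    ∫ ω, Real.exp (lam ⬝ᵥ (∑ τ ∈ Icc 1 (t - 1), (1 / Real.sqrt 2) • Y τ ω) -
      (1 / 2) * (lam ⬝ᵥ (Shat ω + Sbar ω).mulVec lam)) ∂P ≤ 1 := by
  classical
  set W : ℕ → Ω → ℝ := fun τ ω => (1 / Real.sqrt 2) * (lam ⬝ᵥ Y τ ω) with hW_def
  set V : ℕ → Ω → ℝ := fun τ ω => (1 / 2) * (lam ⬝ᵥ ((vecMulVec (X τ ω) (X τ ω) +
      (P[fun ω' => vecMulVec (X τ ω') (X τ ω') | ℱ (τ - 1)]) ω).mulVec lam)) with hV_def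
  set c0 : ℝ := 2 * Real.sqrt (lam ⬝ᵥ lam) + lam ⬝ᵥ lam + 1 with hc0_def
  have hc0 : 0 ≤ c0 := by
    rw [hc0_def]
    nlinarith [Real.sqrt_nonneg (lam ⬝ᵥ lam), MDEaux.dot_self_nonneg lam]
  have H : ∀ τ : ℕ, 1 ≤ τ →
      StronglyMeasurable[ℱ τ] (W τ) ∧ StronglyMeasurable[ℱ τ] (V τ) ∧
      (∀ᵐ ω ∂P, |W τ ω| ≤ c0) ∧ (∀ᵐ ω ∂P, |V τ ω| ≤ c0) ∧
      (∀ᵐ ω ∂P, (P[fun ω' => Real.exp (W τ ω' - V τ ω')|ℱ (τ - 1)]) ω ≤ 1) := by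
    intro τ hτ
    refine MDEaux.one_step P (ℱ.le τ) (ℱ.mono (Nat.sub_le τ 1)) (hXmeas τ hτ)
      (fun ω => ?_) μ lam ?_ (W τ) (V τ) (fun ω => ?_) (fun ω => rfl)
    · have h0 : 0 ≤ X τ ω ⬝ᵥ X τ ω := MDEaux.dot_self_nonneg _
      nlinarith [hXbdd τ hτ ω, Real.sq_sqrt h0, Real.sqrt_nonneg (X τ ω ⬝ᵥ X τ ω)]
    · have h0 : 0 ≤ μ ⬝ᵥ μ := MDEaux.dot_self_nonneg _
      nlinarith [hμ, Real.sq_sqrt h0, Real.sqrt_nonneg (μ ⬝ᵥ μ)]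
    · simp only [hW_def]
      rw [hY τ ω, hD τ ω]
  have hbd : ∀ᵐ ω ∂P, ∀ τ : ℕ, 1 ≤ τ → |W τ ω - V τ ω| ≤ 2 * c0 := by
    rw [ae_all_iff]
    intro τ
    by_cases hτ : 1 ≤ τ
    · filter_upwards [(H τ hτ).2.2.1, (H τ hτ).2.2.2.1] with ω h1 h2 _
      calc |W τ ω - V τ ω| ≤ |W τ ω| + |V τ ω| := abs_sub _ _
        _ ≤ 2 * c0 := by linarith
    · filter_upwards with ω h
      exact absurd h hτ
  have main : ∀ n : ℕ, ∫ ω, Real.exp (∑ τ ∈ Icc 1 n, (W τ ω - V τ ω)) ∂P ≤ 1 := by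
    intro n
    induction n with
    | zero => simp
    | succ n ih =>
      have hins : Icc 1 (n+1) = insert (n+1) (Icc 1 n) := by
        ext x
        simp only [Finset.mem_Icc, Finset.mem_insert]
        omega
      have hnot : (n+1) ∉ Icc 1 n := by simp
      set G : Ω → ℝ := fun ω => Real.exp (∑ τ ∈ Icc 1 n, (W τ ω - V τ ω)) with hG_def
      set g : Ω → ℝ := fun ω => Real.exp (W (n+1) ω - V (n+1) ω) with hg_def
      have hGmeas : StronglyMeasurable[ℱ n] G := by
        apply Real.continuous_exp.comp_stronglyMeasurable
        refine Finset.stronglyMeasurable_fun_sum _ fun τ hτm => ?_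
        have h1 : 1 ≤ τ := (Finset.mem_Icc.1 hτm).1
        have h2 : τ ≤ n := (Finset.mem_Icc.1 hτm).2
        exact (((H τ h1).1).mono (ℱ.mono h2)).sub (((H τ h1).2.1).mono (ℱ.mono h2))
      have hgmeas : StronglyMeasurable[ℱ (n+1)] g :=
        Real.continuous_exp.comp_stronglyMeasurable
          (((H (n+1) (by omega)).1).sub ((H (n+1) (by omega)).2.1))
      have hGbd : ∀ᵐ ω ∂P, |G ω| ≤ Real.exp (n * (2 * c0)) := by
        filter_upwards [hbd] with ω h
        rw [hG_def, Real.abs_exp]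
        apply Real.exp_le_exp.2
        calc ∑ τ ∈ Icc 1 n, (W τ ω - V τ ω) ≤ ∑ τ ∈ Icc 1 n, |W τ ω - V τ ω| :=
              Finset.sum_le_sum fun τ _ => le_abs_self _
          _ ≤ ∑ τ ∈ Icc 1 n, (2 * c0) :=
              Finset.sum_le_sum fun τ hτ => h τ (Finset.mem_Icc.1 hτ).1
          _ = ((Icc 1 n).card : ℝ) * (2 * c0) := by rw [Finset.sum_const, nsmul_eq_mul]
          _ = n * (2 * c0) := by rw [Nat.card_Icc]; norm_num
      have hgbd : ∀ᵐ ω ∂P, |g ω| ≤ Real.exp (2 * c0) := by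
        filter_upwards [hbd] with ω h
        rw [hg_def, Real.abs_exp]
        apply Real.exp_le_exp.2
        calc W (n+1) ω - V (n+1) ω ≤ |W (n+1) ω - V (n+1) ω| := le_abs_self _
          _ ≤ 2 * c0 := h (n+1) (by omega)
      have hGint : Integrable G P :=
        MDEaux.bddInt (hGmeas.mono (ℱ.le n)).aestronglyMeasurable hGbd
      have hgint : Integrable g P :=
        MDEaux.bddInt (hgmeas.mono (ℱ.le _)).aestronglyMeasurable hgbd
      have hGgint : Integrable (G * g) P := by
        refine MDEaux.bddInt (c := Real.exp (n * (2 * c0)) * Real.exp (2 * c0))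
          (((hGmeas.mono (ℱ.le n)).mul (hgmeas.mono (ℱ.le _))).aestronglyMeasurable) ?_
        filter_upwards [hGbd, hgbd] with ω h1 h2
        rw [Pi.mul_apply, abs_mul]
        exact mul_le_mul h1 h2 (abs_nonneg _) (le_of_lt (Real.exp_pos _))
      have hone : ∀ᵐ ω ∂P, (P[g|ℱ n]) ω ≤ 1 := (H (n+1) (by omega)).2.2.2.2
      have hstep : ∀ᵐ ω ∂P, (P[G * g|ℱ n]) ω ≤ G ω := by
        have hpull : P[G * g|ℱ n] =ᵐ[P] G * P[g|ℱ n] :=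
          condExp_mul_of_stronglyMeasurable_left hGmeas hGgint hgint
        filter_upwards [hpull, hone] with ω e1 e2
        rw [e1, Pi.mul_apply]
        have hG0 : 0 ≤ G ω := le_of_lt (Real.exp_pos _)
        calc G ω * (P[g|ℱ n]) ω ≤ G ω * 1 := mul_le_mul_of_nonneg_left e2 hG0
          _ = G ω := mul_one _
      have hsum : ∀ ω : Ω, ∑ τ ∈ Icc 1 (n+1), (W τ ω - V τ ω) =
          (∑ τ ∈ Icc 1 n, (W τ ω - V τ ω)) + (W (n+1) ω - V (n+1) ω) := by
        intro ω
        rw [hins, Finset.sum_insert hnot]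
        ring
      calc ∫ ω, Real.exp (∑ τ ∈ Icc 1 (n+1), (W τ ω - V τ ω)) ∂P
          = ∫ ω, (G * g) ω ∂P := by
            refine integral_congr_ae (Filter.Eventually.of_forall fun ω => ?_)
            have hpt : Real.exp (∑ τ ∈ Icc 1 (n+1), (W τ ω - V τ ω)) = G ω * g ω := by
              simp only [hG_def, hg_def]
              rw [hsum ω, Real.exp_add]
            exact hpt
        _ = ∫ ω, (P[G * g|ℱ n]) ω ∂P := (integral_condExp (ℱ.le n)).symm
        _ ≤ ∫ ω, G ω ∂P := integral_mono_ae integrable_condExp hGint hstep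
        _ ≤ 1 := ih
  have hfinal : ∀ ω, lam ⬝ᵥ (∑ τ ∈ Icc 1 (t - 1), (1 / Real.sqrt 2) • Y τ ω) -
      (1 / 2) * (lam ⬝ᵥ (Shat ω + Sbar ω).mulVec lam) =
      ∑ τ ∈ Icc 1 (t - 1), (W τ ω - V τ ω) := by
    intro ω
    have e1 : lam ⬝ᵥ (∑ τ ∈ Icc 1 (t - 1), (1 / Real.sqrt 2) • Y τ ω) =
        ∑ τ ∈ Icc 1 (t - 1), W τ ω := by
      rw [MDEaux.dot_sum]
      refine Finset.sum_congr rfl fun τ _ => ?_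
      rw [dotProduct_smul, smul_eq_mul]
    have e2 : (1 / 2 : ℝ) * (lam ⬝ᵥ (Shat ω + Sbar ω).mulVec lam) =
        ∑ τ ∈ Icc 1 (t - 1), V τ ω := by
      rw [hShat, hSbar, ← Finset.sum_add_distrib, MDEaux.sum_mulVec', MDEaux.dot_sum,
        Finset.mul_sum]
    rw [e1, e2, Finset.sum_sub_distrib]
  refine le_trans (le_of_eq (integral_congr_ae (Filter.Eventually.of_forall fun ω => ?_)))
    (main (t - 1))
  exact congrArg Real.exp (hfinal ω)
end
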